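/- Let U_n have a Bernstein basis p_{n,k} for {a,b}, let f_0 ∈ U_n be strictly positive, and suppose the space D_{f_0}U_n = {(f/f_0)' : f ∈ U_n} has a Bernstein basis q_{n-1,k}, k=0,...,n-1. Then for each k = 0,...,n there exist constants c_k and d_k (with c_0 = 0 and d_n = 0) such that (p_{n,k}/f_0)' = c_k q_{n-1,k-1} + d_k q_{n-1,k}, where for k ≥ 1, c_k = p_{n,k}^{(k)}(a) / (f_0(a) q_{n-1,k-1}^{(k-1)}(a)) ≠ 0, and for k ≤ n-1, d_k = p_{n,k}^{(n-k)}(b) / (f_0(b) q_{n-1,k}^{(n-1-k)}(b)) ≠ 0. -/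

import Mathlib

open Set Finset

/-- `f` has a zero of order exactly `k` at `a`. -/
def ZeroOfOrder (f : ℝ → ℝ) (a : ℝ) (k : ℕ) : Prop :=
  (∀ i < k, iteratedDeriv i f a = 0) ∧ iteratedDeriv k f a ≠ 0


lemma iterDW_open {u : Set ℝ} (hu : IsOpen u) (m : ℕ) (f : ℝ → ℝ) {x : ℝ} (hx : x ∈ u) :
    iteratedDerivWithin m f u x = iteratedDeriv m f x := by
  rw [iteratedDerivWithin_eq_iteratedFDerivWithin, iteratedDeriv_eq_iteratedFDeriv,
    iteratedFDerivWithin_of_isOpen m hu hx]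

lemma iterDW_eq_iterD {u s : Set ℝ} (hu : IsOpen u) {N m : ℕ} {f : ℝ → ℝ}
    (hf : ContDiffOn ℝ N f u) (hm : m ≤ N) (hs : UniqueDiffOn ℝ s) {x : ℝ}
    (hxs : x ∈ s) (hxu : x ∈ u) :
    iteratedDerivWithin m f s x = iteratedDeriv m f x := by
  rw [iteratedDerivWithin_eq_iteratedFDerivWithin, iteratedDeriv_eq_iteratedFDeriv]
  have h1 : iteratedFDerivWithin ℝ m f (s ∩ u) x = iteratedFDerivWithin ℝ m f s x :=
    iteratedFDerivWithin_inter (hu.mem_nhds hxu)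
  have ht : HasFTaylorSeriesUpToOn N f (ftaylorSeriesWithin ℝ f u) u :=
    hf.ftaylorSeriesWithin hu.uniqueDiffOn
  have h2 : ftaylorSeriesWithin ℝ f u x m = iteratedFDerivWithin ℝ m f (s ∩ u) x :=
    (ht.mono inter_subset_right).eq_iteratedFDerivWithin_of_uniqueDiffOn
      (by exact_mod_cast hm) (hs.inter hu) ⟨hxs, hxu⟩
  have h3 : ftaylorSeriesWithin ℝ f u x m = iteratedFDerivWithin ℝ m f u x := rfl
  rw [← h1, ← h2, h3, iteratedFDerivWithin_of_isOpen m hu hxu]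

lemma iteratedDeriv_congr_nhds {f g : ℝ → ℝ} {x : ℝ} (h : f =ᶠ[nhds x] g) (m : ℕ) :
    iteratedDeriv m f x = iteratedDeriv m g x := by
  rw [iteratedDeriv_eq_iteratedFDeriv, iteratedDeriv_eq_iteratedFDeriv,
    ← iteratedFDerivWithin_univ, ← iteratedFDerivWithin_univ]
  have h' : f =ᶠ[nhdsWithin x Set.univ] g := by rw [nhdsWithin_univ]; exact h
  exact congrFun (congrArg _ (Filter.EventuallyEq.iteratedFDerivWithin_eq (𝕜 := ℝ) h' h.eq_of_nhds m)) _

lemma diffAt_iter {u : Set ℝ} (hu : IsOpen u) {N i : ℕ} {f : ℝ → ℝ}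
    (hf : ContDiffOn ℝ N f u) (hi : i < N) {x : ℝ} (hx : x ∈ u) :
    DifferentiableAt ℝ (iteratedDeriv i f) x := by
  have h1 : DifferentiableWithinAt ℝ (iteratedDerivWithin i f u) u x :=
    hf.differentiableOn_iteratedDerivWithin (by exact_mod_cast hi) hu.uniqueDiffOn x hx
  have h2 : DifferentiableAt ℝ (iteratedDerivWithin i f u) x :=
    h1.differentiableAt (hu.mem_nhds hx)
  have hev : iteratedDerivWithin i f u =ᶠ[nhds x] iteratedDeriv i f := by
    filter_upwards [hu.mem_nhds hx] with y hy using iterDW_open hu i f hy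
  exact (Filter.EventuallyEq.differentiableAt_iff hev).1 h2

lemma iteratedDeriv_add' {j : ℕ} {f g : ℝ → ℝ} (hf : ContDiff ℝ j f) (hg : ContDiff ℝ j g)
    (x : ℝ) : iteratedDeriv j (fun y => f y + g y) x = iteratedDeriv j f x + iteratedDeriv j g x := by
  have := iteratedDerivWithin_add (mem_univ x) uniqueDiffOn_univ hf.contDiffWithinAt hg.contDiffWithinAt
  simpa [iteratedDerivWithin_univ, Pi.add_def] using this

lemma iteratedDeriv_cmul {j : ℕ} {f : ℝ → ℝ} (hf : ContDiff ℝ j f) (c : ℝ) (x : ℝ) :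
    iteratedDeriv j (fun y => c * f y) x = c * iteratedDeriv j f x := by
  simpa [iteratedDerivWithin_univ] using
    iteratedDerivWithin_const_mul (mem_univ x) uniqueDiffOn_univ c hf.contDiffOn


lemma binom_step (m : ℕ) (a b : ℕ → ℝ) :
    ∑ i ∈ Finset.range (m + 1),
        (m.choose i : ℝ) * (a (i + 1) * b (m - i) + a i * b (m - i + 1)) =
      ∑ i ∈ Finset.range (m + 2), ((m + 1).choose i : ℝ) * (a i * b (m + 1 - i)) := by
  have reindex : ∀ c : ℕ → ℝ,
      ∑ i ∈ Finset.range (m + 2), c i * (a i * b (m + 1 - i)) =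
        (∑ i ∈ Finset.range (m + 1), c (i + 1) * (a (i + 1) * b (m - i))) + c 0 * (a 0 * b (m + 1)) := by
    intro c
    rw [Finset.sum_range_succ' (fun i => c i * (a i * b (m + 1 - i))) (m + 1)]
    congr 1
    refine Finset.sum_congr rfl fun i hi => ?_
    have : m + 1 - (i + 1) = m - i := by omega
    rw [this]
  rw [reindex]
  have pascal : ∀ i ∈ Finset.range (m + 1),
      ((m + 1).choose (i + 1) : ℝ) * (a (i + 1) * b (m - i)) =
        (m.choose i : ℝ) * (a (i + 1) * b (m - i)) +
          (m.choose (i + 1) : ℝ) * (a (i + 1) * b (m - i)) := by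
    intro i hi
    rw [Nat.choose_succ_succ]
    push_cast
    ring
  rw [Finset.sum_congr rfl pascal, Finset.sum_add_distrib]
  have split : ∀ i ∈ Finset.range (m + 1),
      (m.choose i : ℝ) * (a (i + 1) * b (m - i) + a i * b (m - i + 1)) =
        (m.choose i : ℝ) * (a (i + 1) * b (m - i)) + (m.choose i : ℝ) * (a i * b (m + 1 - i)) := by
    intro i hi
    have : m - i + 1 = m + 1 - i := by
      have := Finset.mem_range.1 hi; omega
    rw [this]; ring
  rw [Finset.sum_congr rfl split, Finset.sum_add_distrib]
  -- ∑ C(m,i) a i b (m+1-i) = ∑ C(m,i+1) a(i+1) b(m-i) + C(m+1,0) a0 b(m+1)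
  have h1 : ∑ i ∈ Finset.range (m + 2), (m.choose i : ℝ) * (a i * b (m + 1 - i)) =
      (∑ i ∈ Finset.range (m + 1), (m.choose (i + 1) : ℝ) * (a (i + 1) * b (m - i))) +
        (m.choose 0 : ℝ) * (a 0 * b (m + 1)) := reindex _
  have h2 : ∑ i ∈ Finset.range (m + 2), (m.choose i : ℝ) * (a i * b (m + 1 - i)) =
      ∑ i ∈ Finset.range (m + 1), (m.choose i : ℝ) * (a i * b (m + 1 - i)) := by
    rw [Finset.sum_range_succ, Nat.choose_succ_self]
    simp
  have h3 := h1.symm.trans h2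
  simp only [Nat.choose_zero_right, Nat.cast_one, one_mul] at h3 ⊢
  linarith [h3]

lemma iterDW_open' {u : Set ℝ} (hu : IsOpen u) (m : ℕ) (f : ℝ → ℝ) {x : ℝ} (hx : x ∈ u) :
    iteratedDerivWithin m f u x = iteratedDeriv m f x := by
  rw [iteratedDerivWithin_eq_iteratedFDerivWithin, iteratedDeriv_eq_iteratedFDeriv,
    iteratedFDerivWithin_of_isOpen m hu hx]

lemma diffAt_iter' {u : Set ℝ} (hu : IsOpen u) {N i : ℕ} {f : ℝ → ℝ}
    (hf : ContDiffOn ℝ N f u) (hi : i < N) {x : ℝ} (hx : x ∈ u) :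
    DifferentiableAt ℝ (iteratedDeriv i f) x := by
  have h1 : DifferentiableWithinAt ℝ (iteratedDerivWithin i f u) u x :=
    hf.differentiableOn_iteratedDerivWithin (by exact_mod_cast hi) hu.uniqueDiffOn x hx
  have h2 : DifferentiableAt ℝ (iteratedDerivWithin i f u) x :=
    h1.differentiableAt (hu.mem_nhds hx)
  have hev : iteratedDerivWithin i f u =ᶠ[nhds x] iteratedDeriv i f := by
    filter_upwards [hu.mem_nhds hx] with y hy using iterDW_open' hu i f hy
  exact (Filter.EventuallyEq.differentiableAt_iff hev).1 h2

lemma leibniz_open {u : Set ℝ} (hu : IsOpen u) {N : ℕ} {f g : ℝ → ℝ}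
    (hf : ContDiffOn ℝ N f u) (hg : ContDiffOn ℝ N g u) :
    ∀ m, m ≤ N → ∀ x ∈ u, iteratedDeriv m (fun y => f y * g y) x =
      ∑ i ∈ Finset.range (m + 1),
        (m.choose i : ℝ) * (iteratedDeriv i f x * iteratedDeriv (m - i) g x) := by
  intro m
  induction m with
  | zero => intro _ x hx; simp
  | succ m IH =>
    intro hm x hx
    have hmN : m ≤ N := by omega
    rw [iteratedDeriv_succ]
    have hev : iteratedDeriv m (fun y => f y * g y) =ᶠ[nhds x]
        (fun y => ∑ i ∈ Finset.range (m + 1),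
          (m.choose i : ℝ) * (iteratedDeriv i f y * iteratedDeriv (m - i) g y)) := by
      filter_upwards [hu.mem_nhds hx] with y hy using IH hmN y hy
    rw [hev.deriv_eq]
    have hdf : ∀ i ∈ Finset.range (m + 1), DifferentiableAt ℝ (iteratedDeriv i f) x :=
      fun i hi => diffAt_iter' hu hf (by have := Finset.mem_range.1 hi; omega) hx
    have hdg : ∀ i ∈ Finset.range (m + 1), DifferentiableAt ℝ (iteratedDeriv (m - i) g) x :=
      fun i hi => diffAt_iter' hu hg (by have := Finset.mem_range.1 hi; omega) hx
    rw [deriv_fun_sum (fun i hi => (by exact ((hdf i hi).mul (hdg i hi)).const_mul _ : DifferentiableAt ℝ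
      (fun y => (m.choose i : ℝ) * (iteratedDeriv i f y * iteratedDeriv (m - i) g y)) x))]
    have hterm : ∀ i ∈ Finset.range (m + 1),
        deriv (fun y => (m.choose i : ℝ) * (iteratedDeriv i f y * iteratedDeriv (m - i) g y)) x =
          (m.choose i : ℝ) * (iteratedDeriv (i + 1) f x * iteratedDeriv (m - i) g x +
            iteratedDeriv i f x * iteratedDeriv (m - i + 1) g x) := by
      intro i hi
      rw [deriv_const_mul _ (by exact (hdf i hi).mul (hdg i hi) : DifferentiableAt ℝ
          (fun y => iteratedDeriv i f y * iteratedDeriv (m - i) g y) x), deriv_fun_mul (hdf i hi) (hdg i hi),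
        ← iteratedDeriv_succ, ← iteratedDeriv_succ]
    rw [Finset.sum_congr rfl hterm]
    exact binom_step m (fun i => iteratedDeriv i f x) (fun i => iteratedDeriv i g x)

section
variable {u : Set ℝ}

lemma div_iteratedDeriv (hu : IsOpen u) {N k : ℕ} (hk : k ≤ N) {p f₀ : ℝ → ℝ}
    (hp : ContDiffOn ℝ N p u) (hf : ContDiffOn ℝ N f₀ u) (hf0 : ∀ x ∈ u, f₀ x ≠ 0)
    {a : ℝ} (ha : a ∈ u) (hvan : ∀ i < k, iteratedDeriv i p a = 0) :
    ∀ m, m ≤ k → iteratedDeriv m (fun y => p y / f₀ y) a = iteratedDeriv m p a / f₀ a := by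
  set F := fun y => p y / f₀ y with hF_def
  have hF : ContDiffOn ℝ N F u := hp.div hf hf0
  intro m
  induction m using Nat.strong_induction_on with
  | _ m IH =>
    intro hm
    have hev : p =ᶠ[nhds a] fun y => F y * f₀ y := by
      filter_upwards [hu.mem_nhds ha] with y hy
      rw [hF_def]
      exact (div_mul_cancel₀ _ (hf0 y hy)).symm
    have h1 : iteratedDeriv m p a = ∑ i ∈ Finset.range (m + 1),
        (m.choose i : ℝ) * (iteratedDeriv i F a * iteratedDeriv (m - i) f₀ a) := by
      rw [iteratedDeriv_congr_nhds hev m, leibniz_open hu hF hf m (hm.trans hk) a ha]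
    have h2 : ∀ i < m, iteratedDeriv i F a = 0 := by
      intro i hi
      rw [IH i hi (hi.le.trans hm), hvan i (lt_of_lt_of_le hi hm), zero_div]
    rw [Finset.sum_eq_single m (fun i hi hne => by
        rw [h2 i (lt_of_le_of_ne (by have := Finset.mem_range.1 hi; omega) hne), zero_mul,
          mul_zero])
      (fun h => absurd (Finset.mem_range.2 (Nat.lt_succ_self m)) h)] at h1
    rw [Nat.choose_self, Nat.cast_one, one_mul, Nat.sub_self, iteratedDeriv_zero] at h1
    rw [eq_div_iff (hf0 a ha)]
    exact h1.symm

lemma iteratedDeriv_finsum {n j N : ℕ} {q : ℕ → ℝ → ℝ} (w : ℕ → ℝ)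
    (hq : ∀ i < n, ContDiff ℝ N (q i)) (hj : j ≤ N) (x : ℝ) :
    iteratedDeriv j (fun y => ∑ i ∈ Finset.range n, w i * q i y) x =
      ∑ i ∈ Finset.range n, w i * iteratedDeriv j (q i) x := by
  have hq' : ∀ i < n, ContDiff ℝ j (q i) := fun i hi => (hq i hi).of_le (by exact_mod_cast hj)
  clear hq hj
  induction n with
  | zero =>
    simp only [Finset.range_zero, Finset.sum_empty]
    have : iteratedDeriv j (fun _ : ℝ => (0 : ℝ)) x = (0 : ℝ) := by
      have h0 := iteratedDeriv_cmul (j := j) (f := fun _ : ℝ => (0 : ℝ)) contDiff_const (0 : ℝ) x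
      simpa using h0
    simpa using this
  | succ n IHn =>
    have hsum : ContDiff ℝ j (fun y => ∑ i ∈ Finset.range n, w i * q i y) := by
      apply ContDiff.sum
      intro i hi
      exact contDiff_const.mul (hq' i (by have := Finset.mem_range.1 hi; omega))
    have hlast : ContDiff ℝ j (fun y => w n * q n y) :=
      contDiff_const.mul (hq' n (Nat.lt_succ_self n))
    have hfun : (fun y => ∑ i ∈ Finset.range (n + 1), w i * q i y) =
        fun y => (∑ i ∈ Finset.range n, w i * q i y) + w n * q n y := by
      funext y; rw [Finset.sum_range_succ]
    rw [hfun, iteratedDeriv_add' hsum hlast x,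
      IHn (fun i hi => hq' i (hi.trans (Nat.lt_succ_self n))),
      iteratedDeriv_cmul (hq' n (Nat.lt_succ_self n)) (w n) x, Finset.sum_range_succ]

lemma tri {n : ℕ} {w : ℕ → ℝ} {M : ℕ → ℕ → ℝ} {v : ℕ → ℝ}
    (hM0 : ∀ j i, i < n → j < i → M j i = 0) (hMd : ∀ i, i < n → M i i ≠ 0)
    (hv : ∀ j, j < n → v j = ∑ i ∈ Finset.range n, w i * M j i) :
    ∀ t, t < n → (∀ j, j < t → v j = 0) →
      (∀ i, i < t → w i = 0) ∧ v t = w t * M t t := by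
  have key : ∀ t, t < n → (∀ j, j < t → v j = 0) → ∀ i, i < t → w i = 0 := by
    intro t
    induction t using Nat.strong_induction_on with
    | _ t IH =>
      intro htn hz i hit
      have hin : i < n := hit.trans htn
      have hw : ∀ j, j < i → w j = 0 := IH i hit hin (fun j hj => hz j (hj.trans hit))
      have h0 : (0 : ℝ) = ∑ j ∈ Finset.range n, w j * M i j := by
        rw [← hv i hin, hz i hit]
      rw [Finset.sum_eq_single i (fun b hb hbne => by
          rcases hbne.lt_or_gt with h | h
          · rw [hw b h, zero_mul]
          · rw [hM0 i b (Finset.mem_range.1 hb) h, mul_zero])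
        (fun h => absurd (Finset.mem_range.2 hin) h)] at h0
      exact (mul_eq_zero.1 h0.symm).resolve_right (hMd i hin)
  intro t htn hz
  refine ⟨key t htn hz, ?_⟩
  rw [hv t htn, Finset.sum_eq_single t (fun b hb hbne => by
      rcases hbne.lt_or_gt with h | h
      · rw [key t htn hz b h, zero_mul]
      · rw [hM0 t b (Finset.mem_range.1 hb) h, mul_zero])
    (fun h => absurd (Finset.mem_range.2 htn) h)]
end


/-- Proposition PropABL: with a Bernstein basis `p_{n,k}` of `U_n`, a strictly positive
`f₀ ∈ U_n`, and a Bernstein basis `q_{n-1,k}` of `D_{f₀}U_n`, there are constants `c_k, d_k`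
(with `c_0 = 0`, `d_n = 0`) such that `(p_{n,k}/f₀)' = c_k q_{n-1,k-1} + d_k q_{n-1,k}`,
where for `k ≥ 1`, `c_k = p_{n,k}^{(k)}(a)/(f₀(a) q_{n-1,k-1}^{(k-1)}(a)) ≠ 0` and for
`k ≤ n-1`, `d_k = p_{n,k}^{(n-k)}(b)/(f₀(b) q_{n-1,k}^{(n-1-k)}(b)) ≠ 0`. -/
theorem derivative_recursion_bernstein
    (n : ℕ) (hn : 1 ≤ n) (a b : ℝ) (hab : a < b)
    (p : ℕ → ℝ → ℝ) (q : ℕ → ℝ → ℝ) (f₀ : ℝ → ℝ)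
    (hpsmooth : ∀ k ≤ n, ContDiff ℝ n (p k))
    (hqsmooth : ∀ k ≤ n - 1, ContDiff ℝ (n - 1) (q k))
    (hf₀smooth : ContDiff ℝ n f₀)
    (hpa : ∀ k ≤ n, ZeroOfOrder (p k) a k)
    (hpb : ∀ k ≤ n, ZeroOfOrder (p k) b (n - k))
    (hqa : ∀ k ≤ n - 1, ZeroOfOrder (q k) a k)
    (hqb : ∀ k ≤ n - 1, ZeroOfOrder (q k) b (n - 1 - k))
    (hf₀pos : ∀ x ∈ Icc a b, 0 < f₀ x)
    -- `q_{n-1,0},…,q_{n-1,n-1}` is a basis of `D_{f₀}U_n`: each `(p_{n,k}/f₀)'`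
    -- is a linear combination of the `q_{n-1,i}`
    (hD : ∀ k ≤ n, ∃ w : ℕ → ℝ, ∀ x ∈ Icc a b,
      deriv (fun y => p k y / f₀ y) x = ∑ i ∈ Finset.range n, w i * q i x) :
    ∃ c d : ℕ → ℝ, c 0 = 0 ∧ d n = 0 ∧
      (∀ k, 1 ≤ k → k ≤ n → c k ≠ 0 ∧
        c k = iteratedDeriv k (p k) a / (f₀ a * iteratedDeriv (k - 1) (q (k - 1)) a)) ∧
      (∀ k ≤ n - 1, d k ≠ 0 ∧
        d k = iteratedDeriv (n - k) (p k) b / (f₀ b * iteratedDeriv (n - 1 - k) (q k) b)) ∧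
      (∀ k ≤ n, ∀ x ∈ Icc a b,
        deriv (fun y => p k y / f₀ y) x = c k * q (k - 1) x + d k * q k x) := by
  classical
  have hsu : UniqueDiffOn ℝ (Icc a b) := uniqueDiffOn_Icc hab
  have hamem : a ∈ Icc a b := ⟨le_refl a, hab.le⟩
  have hbmem : b ∈ Icc a b := ⟨hab.le, le_refl b⟩
  set u : Set ℝ := f₀ ⁻¹' ({0}ᶜ) with hu_def
  have hu : IsOpen u := isOpen_compl_singleton.preimage hf₀smooth.continuous
  have hau : a ∈ u := (hf₀pos a hamem).ne'
  have hbu : b ∈ u := (hf₀pos b hbmem).ne'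
  have hf0u : ∀ x ∈ u, f₀ x ≠ 0 := fun x hx => hx
  have key : ∀ k, k ≤ n → ∀ w : ℕ → ℝ,
      (∀ x ∈ Icc a b, deriv (fun y => p k y / f₀ y) x = ∑ i ∈ Finset.range n, w i * q i x) →
      (∀ i, i < n → i ≠ k - 1 → i ≠ k → w i = 0) ∧
      (1 ≤ k → (w (k - 1) ≠ 0 ∧
        w (k - 1) = iteratedDeriv k (p k) a / (f₀ a * iteratedDeriv (k - 1) (q (k - 1)) a))) ∧
      (k ≤ n - 1 → (w k ≠ 0 ∧
        w k = iteratedDeriv (n - k) (p k) b / (f₀ b * iteratedDeriv (n - 1 - k) (q k) b))) := by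
    intro k hk w hw
    set F := fun y => p k y / f₀ y with hFdef
    have hFu : ContDiffOn ℝ n F u := (hpsmooth k hk).contDiffOn.div hf₀smooth.contDiffOn hf0u
    have hcast : ((n - 1 : ℕ) : WithTop ℕ∞) + 1 = (n : WithTop ℕ∞) := by
      exact_mod_cast congrArg (Nat.cast : ℕ → WithTop ℕ∞) (Nat.sub_add_cancel hn)
    have hgu : ContDiffOn ℝ (n - 1) (deriv F) u := hFu.deriv_of_isOpen hu (le_of_eq hcast)
    have hh : ContDiff ℝ (n - 1) (fun x => ∑ i ∈ Finset.range n, w i * q i x) :=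
      ContDiff.sum (fun i hi =>
        contDiff_const.mul (hqsmooth i (by have := Finset.mem_range.1 hi; omega)))
    have hv : ∀ z, z ∈ Icc a b → z ∈ u → ∀ j, j < n →
        iteratedDeriv j (deriv F) z = ∑ i ∈ Finset.range n, w i * iteratedDeriv j (q i) z := by
      intro z hz hzu j hj
      have hj' : j ≤ n - 1 := by omega
      calc iteratedDeriv j (deriv F) z
          = iteratedDerivWithin j (deriv F) (Icc a b) z :=
            (iterDW_eq_iterD hu hgu hj' hsu hz hzu).symm
        _ = iteratedDerivWithin j (fun x => ∑ i ∈ Finset.range n, w i * q i x) (Icc a b) z :=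
            iteratedDerivWithin_congr (fun y hy => hw y hy) hz
        _ = iteratedDeriv j (fun x => ∑ i ∈ Finset.range n, w i * q i x) z :=
            iterDW_eq_iterD isOpen_univ hh.contDiffOn hj' hsu hz (mem_univ z)
        _ = ∑ i ∈ Finset.range n, w i * iteratedDeriv j (q i) z :=
            iteratedDeriv_finsum w (fun i hi => hqsmooth i (by omega)) hj' z
    have hFa : ∀ m, m ≤ k → iteratedDeriv m F a = iteratedDeriv m (p k) a / f₀ a :=
      div_iteratedDeriv hu hk (hpsmooth k hk).contDiffOn hf₀smooth.contDiffOn hf0u hau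
        (hpa k hk).1
    have hFb : ∀ m, m ≤ n - k → iteratedDeriv m F b = iteratedDeriv m (p k) b / f₀ b :=
      div_iteratedDeriv hu (Nat.sub_le n k) (hpsmooth k hk).contDiffOn hf₀smooth.contDiffOn
        hf0u hbu (hpb k hk).1
    have hga : ∀ j, j + 1 ≤ k →
        iteratedDeriv j (deriv F) a = iteratedDeriv (j + 1) (p k) a / f₀ a := by
      intro j hj
      rw [← iteratedDeriv_succ']
      exact hFa (j + 1) hj
    have hgb : ∀ j, j + 1 ≤ n - k →
        iteratedDeriv j (deriv F) b = iteratedDeriv (j + 1) (p k) b / f₀ b := by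
      intro j hj
      rw [← iteratedDeriv_succ']
      exact hFb (j + 1) hj
    have Ma0 : ∀ j i, i < n → j < i → iteratedDeriv j (q i) a = 0 :=
      fun j i hi hj => (hqa i (by omega)).1 j hj
    have Mad : ∀ i, i < n → iteratedDeriv i (q i) a ≠ 0 := fun i hi => (hqa i (by omega)).2
    have hva : ∀ j, j < n → iteratedDeriv j (deriv F) a =
        ∑ i ∈ Finset.range n, w i * iteratedDeriv j (q i) a :=
      fun j hj => hv a hamem hau j hj
    have aside : 1 ≤ k →
        (∀ i, i < k - 1 → w i = 0) ∧
        iteratedDeriv (k - 1) (deriv F) a = w (k - 1) * iteratedDeriv (k - 1) (q (k - 1)) a := by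
      intro h1k
      exact tri Ma0 Mad hva (k - 1) (by omega) (fun j hj => by
        show iteratedDeriv j (deriv F) a = 0
        rw [hga j (by omega), (hpa k hk).1 (j + 1) (by omega), zero_div])
    have Mb0 : ∀ j i, i < n → j < i → iteratedDeriv j (q (n - 1 - i)) b = 0 := by
      intro j i hi hj
      exact (hqb (n - 1 - i) (by omega)).1 j (by omega)
    have Mbd : ∀ i, i < n → iteratedDeriv i (q (n - 1 - i)) b ≠ 0 := by
      intro i hi
      have h := (hqb (n - 1 - i) (by omega)).2
      have e : n - 1 - (n - 1 - i) = i := by omega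
      rwa [e] at h
    have hvb : ∀ j, j < n → iteratedDeriv j (deriv F) b =
        ∑ i ∈ Finset.range n, w (n - 1 - i) * iteratedDeriv j (q (n - 1 - i)) b := by
      intro j hj
      rw [hv b hbmem hbu j hj]
      exact (Finset.sum_range_reflect (fun i => w i * iteratedDeriv j (q i) b) n).symm
    have bside := tri (w := fun i => w (n - 1 - i))
      (M := fun j i => iteratedDeriv j (q (n - 1 - i)) b)
      (v := fun j => iteratedDeriv j (deriv F) b) Mb0 Mbd hvb (n - 1 - k) (by omega)
      (fun j hj => by
        show iteratedDeriv j (deriv F) b = 0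
        rw [hgb j (by omega), (hpb k hk).1 (j + 1) (by omega), zero_div])
    refine ⟨?_, ?_, ?_⟩
    · intro i hi hne1 hne2
      rcases lt_or_ge i k with hik | hik
      · have h1k : 1 ≤ k := by omega
        exact (aside h1k).1 i (by omega)
      · have hlt : n - 1 - i < n - 1 - k := by omega
        have hz : w (n - 1 - (n - 1 - i)) = 0 := bside.1 (n - 1 - i) hlt
        have e : n - 1 - (n - 1 - i) = i := by omega
        rwa [e] at hz
    · intro h1k
      have hval := (aside h1k).2
      rw [hga (k - 1) (by omega)] at hval
      have e : k - 1 + 1 = k := by omega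
      rw [e] at hval
      have hnum : iteratedDeriv k (p k) a ≠ 0 := (hpa k hk).2
      have hqne : iteratedDeriv (k - 1) (q (k - 1)) a ≠ 0 := Mad (k - 1) (by omega)
      have hwv : w (k - 1) =
          iteratedDeriv k (p k) a / (f₀ a * iteratedDeriv (k - 1) (q (k - 1)) a) := by
        rw [← div_div, hval, mul_div_cancel_right₀ _ hqne]
      exact ⟨by rw [hwv]; exact div_ne_zero hnum (mul_ne_zero hau hqne), hwv⟩
    · intro hk1
      have hval : iteratedDeriv (n - 1 - k) (deriv F) b =
          w (n - 1 - (n - 1 - k)) *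
            iteratedDeriv (n - 1 - k) (q (n - 1 - (n - 1 - k))) b := bside.2
      have e1 : n - 1 - (n - 1 - k) = k := by omega
      rw [e1] at hval
      rw [hgb (n - 1 - k) (by omega)] at hval
      have e2 : n - 1 - k + 1 = n - k := by omega
      rw [e2] at hval
      have hnum : iteratedDeriv (n - k) (p k) b ≠ 0 := (hpb k hk).2
      have hqne : iteratedDeriv (n - 1 - k) (q k) b ≠ 0 := (hqb k hk1).2
      have hwv : w k =
          iteratedDeriv (n - k) (p k) b / (f₀ b * iteratedDeriv (n - 1 - k) (q k) b) := by
        rw [← div_div, hval, mul_div_cancel_right₀ _ hqne]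
      exact ⟨by rw [hwv]; exact div_ne_zero hnum (mul_ne_zero hbu hqne), hwv⟩
  choose W hW using hD
  refine ⟨fun k => if h : 1 ≤ k ∧ k ≤ n then W k h.2 (k - 1) else 0,
          fun k => if h : k ≤ n - 1 then W k (by omega) k else 0, ?_, ?_, ?_, ?_, ?_⟩
  · exact dif_neg (by omega)
  · exact dif_neg (by omega)
  · intro k h1 h2
    simp only [dif_pos (show 1 ≤ k ∧ k ≤ n from ⟨h1, h2⟩)]
    exact (key k h2 (W k h2) (hW k h2)).2.1 h1
  · intro k hk1
    have h2 : k ≤ n := by omega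
    simp only [dif_pos (show k ≤ n - 1 from hk1)]
    exact (key k h2 (W k h2) (hW k h2)).2.2 hk1
  · intro k hk x hx
    rw [hW k hk x hx]
    have hzero := (key k hk (W k hk) (hW k hk)).1
    by_cases hk0 : k = 0
    · subst hk0
      rw [Finset.sum_eq_single 0 (fun i hi hne => by
          rw [hzero i (Finset.mem_range.1 hi) (by omega) hne, zero_mul])
        (fun h => absurd (Finset.mem_range.2 (by omega)) h)]
      simp only [dif_neg (show ¬(1 ≤ 0 ∧ 0 ≤ n) by omega),
        dif_pos (show (0:ℕ) ≤ n - 1 by omega), zero_mul, zero_add]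
    · by_cases hkn : k = n
      · rw [Finset.sum_eq_single (k - 1) (fun i hi hne => by
            rw [hzero i (Finset.mem_range.1 hi) hne (by have := Finset.mem_range.1 hi; omega),
              zero_mul])
          (fun h => absurd (Finset.mem_range.2 (by omega)) h)]
        simp only [dif_pos (show 1 ≤ k ∧ k ≤ n from ⟨by omega, hk⟩),
          dif_neg (show ¬(k ≤ n - 1) by omega), zero_mul, add_zero]
      · have hk1 : 1 ≤ k := by omega
        have hkn1 : k ≤ n - 1 := by omega
        have hsub : ({k - 1, k} : Finset ℕ) ⊆ Finset.range n := by
          intro i hi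
          rw [Finset.mem_insert, Finset.mem_singleton] at hi
          rcases hi with rfl | rfl <;> exact Finset.mem_range.2 (by omega)
        rw [← Finset.sum_subset hsub (fun i hi hni => by
            rw [Finset.mem_insert, Finset.mem_singleton] at hni
            push_neg at hni
            rw [hzero i (Finset.mem_range.1 hi) hni.1 hni.2, zero_mul])]
        rw [Finset.sum_pair (by omega : k - 1 ≠ k)]
        simp only [dif_pos (show 1 ≤ k ∧ k ≤ n from ⟨hk1, hk⟩),
          dif_pos (show k ≤ n - 1 from hkn1)]
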